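/- The matrix M̂ = [[2,2,0,0,0,2],[1,2,0,0,0,0],[1,0,3,2,0,0],[0,1,3,4,5,0],[0,0,3,4,6,0],[0,0,0,0,0,1]] over ℚ has characteristic polynomial (x−1)(x²−4x+2)(x³−13x²+28x−6) = x⁶ − 18x⁵ + 99x⁴ − 226x³ + 224x² − 92x + 12. -/

import Mathlib

open Polynomial in
set_option maxHeartbeats 4000000 in
set_option maxRecDepth 10000 in
theorem stmt_18 :
    let M : Matrix (Fin 6) (Fin 6) ℚ :=
      !![2, 2, 0, 0, 0, 2;
         1, 2, 0, 0, 0, 0;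
         1, 0, 3, 2, 0, 0;
         0, 1, 3, 4, 5, 0;
         0, 0, 3, 4, 6, 0;
         0, 0, 0, 0, 0, 1]
    M.charpoly =
      (Polynomial.X - 1) * (Polynomial.X ^ 2 - 4 * Polynomial.X + 2) *
        (Polynomial.X ^ 3 - 13 * Polynomial.X ^ 2 + 28 * Polynomial.X - 6) ∧
    M.charpoly =
      Polynomial.X ^ 6 - 18 * Polynomial.X ^ 5 + 99 * Polynomial.X ^ 4
        - 226 * Polynomial.X ^ 3 + 224 * Polynomial.X ^ 2 - 92 * Polynomial.X + 12 := by
  intro M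
  have hc : M.charmatrix =
      !![X-2, -2, 0, 0, 0, -2;
         -1, X-2, 0, 0, 0, 0;
         -1, 0, X-3, -2, 0, 0;
         0, -1, -3, X-4, -5, 0;
         0, 0, -3, -4, X-6, 0;
         0, 0, 0, 0, 0, X-1] := by
    refine Matrix.ext fun i j => ?_
    fin_cases i <;> fin_cases j <;>
      simp [M, Matrix.charmatrix_apply_eq, Matrix.charmatrix_apply_ne, map_ofNat,
        Matrix.vecHead, Matrix.vecTail] <;>
      simp [Matrix.cons_val_succ, Matrix.vecHead, Matrix.vecTail, map_ofNat,
        show (5:Fin 6) = Fin.succ 4 from rfl, show (4:Fin 5) = Fin.succ 3 from rfl,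
        show (3:Fin 4) = Fin.succ 2 from rfl] <;> ring
  have h2 : M.charpoly =
      Polynomial.X ^ 6 - 18 * Polynomial.X ^ 5 + 99 * Polynomial.X ^ 4
        - 226 * Polynomial.X ^ 3 + 224 * Polynomial.X ^ 2 - 92 * Polynomial.X + 12 := by
    rw [Matrix.charpoly, hc]
    simp (config := { decide := true }) [Matrix.det_succ_row_zero, Fin.sum_univ_succ, Fin.succAbove]
    ring
  refine ⟨?_, h2⟩
  rw [h2]; ring
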